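/- The n-dimensional complex algebra with basis e₁,…,eₙ and nonzero products e₁e₁ = e₁ + e₂, e_je₁ = e_j (j = 2,…,n) is bi-symmetric: its associator satisfies both (x,y,z) = (y,x,z) and (x,y,z) = (x,z,y) for all x,y,z, but the algebra is not associative. -/
import Mathlib


/-- The product of the algebra with nonzero products e₁e₁ = e₁ + e₂,
e_je₁ = e_j (j ≥ 2), written in coordinates. -/
def mulA6 (n : ℕ) [NeZero n] (x y : Fin n → ℂ) : Fin n → ℂ :=
  fun i => if i = 0 then x 0 * y 0
    else if i = 1 then x 0 * y 0 + x 1 * y 0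
    else x i * y 0

theorem stmt_17 (n : ℕ) [NeZero n] (hn : 2 ≤ n) :
    (∀ x y z : Fin n → ℂ,
      mulA6 n (mulA6 n x y) z - mulA6 n x (mulA6 n y z) =
      mulA6 n (mulA6 n y x) z - mulA6 n y (mulA6 n x z)) ∧
    (∀ x y z : Fin n → ℂ,
      mulA6 n (mulA6 n x y) z - mulA6 n x (mulA6 n y z) =
      mulA6 n (mulA6 n x z) y - mulA6 n x (mulA6 n z y)) ∧
    ¬ (∀ x y z : Fin n → ℂ, mulA6 n (mulA6 n x y) z = mulA6 n x (mulA6 n y z)) := by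
  have h1 : (1 : Fin n) ≠ 0 := by
    have : (1 : ℕ) < n := hn
    simp [Fin.ext_iff, Nat.mod_eq_of_lt this]
  refine ⟨?_, ?_, ?_⟩
  · intro x y z
    funext i
    simp only [mulA6, Pi.sub_apply, if_neg h1]
    split_ifs <;> ring
  · intro x y z
    funext i
    simp only [mulA6, Pi.sub_apply, if_neg h1]
    split_ifs <;> ring
  · intro h
    set e : Fin n → ℂ := fun i => if i = 0 then 1 else 0 with he
    have := congrFun (h e e e) 1
    simp [mulA6, h1, he] at this
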